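/- The polynomial P₁₁(X) = X^6 - X^5 + 7X^4 - 35X^3 + 77X^2 - 121X + 1331 is irreducible over ℚ. -/

import Mathlib

open Polynomial

/-- `P₁₁(X) = X^6 - X^5 + 7X^4 - 35X^3 + 77X^2 - 121X + 1331`, the characteristic
polynomial of Frobenius at 11. -/
noncomputable def P11 : Polynomial ℤ :=
  X ^ 6 - X ^ 5 + 7 * X ^ 4 - 35 * X ^ 3 + 77 * X ^ 2 - 121 * X + 1331

namespace P11Aux

section Generic
variable {K : Type*} [Field K]

/-- If `u ∣ A`, `¬ v ∣ A`, `A ∣ u * v` with `v` irreducible, `u` of degree 3,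
then `A` has degree 3. -/
lemma half_deg {A u v : K[X]} (hv : Irreducible v) (hdu : u.natDegree = 3)
    (hune : u ≠ 0) (hA : A ∣ u * v) (h1 : u ∣ A) (h2 : ¬ v ∣ A) : A.natDegree = 3 := by
  obtain ⟨B, hB⟩ := h1
  have hBdvd : B ∣ v := by
    have h' : u * B ∣ u * v := hB ▸ hA
    exact (mul_dvd_mul_iff_left hune).mp h'
  obtain ⟨c, hc⟩ := hBdvd
  rcases hv.isUnit_or_isUnit hc with hu | hu
  · rw [hB, natDegree_mul hune hu.ne_zero, hdu, natDegree_eq_zero_of_isUnit hu]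
  · exfalso; apply h2
    have hcu : v = B * ↑hu.unit := by rw [hu.unit_spec]; exact hc
    have hvB : v ∣ B := ⟨↑hu.unit⁻¹, by rw [hcu]; exact (Units.mul_inv_cancel_right B hu.unit).symm⟩
    exact hvB.trans ⟨u, by rw [hB, mul_comm]⟩

/-- Any divisor of a product of two distinct monic irreducible cubics is a unit,
has degree 3, or is divisible by the whole product. -/
lemma divisor_deg {A u v : K[X]} (hu : Irreducible u) (hv : Irreducible v)
    (hdu : u.natDegree = 3) (hdv : v.natDegree = 3) (hne : u ≠ v)
    (hmu : u.Monic) (hmv : v.Monic) (hA : A ∣ u * v) :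
    IsUnit A ∨ A.natDegree = 3 ∨ u * v ∣ A := by
  have hune : u ≠ 0 := hu.ne_zero
  have hvne : v ≠ 0 := hv.ne_zero
  have hndvd : ¬ u ∣ v := by
    intro hd
    obtain ⟨c, hc⟩ := hd
    rcases hv.isUnit_or_isUnit hc with h | h
    · exact hu.not_isUnit h
    · apply hne
      have hc1 : c = 1 := by
        have hlc : v.leadingCoeff = u.leadingCoeff * c.leadingCoeff := by
          rw [hc, leadingCoeff_mul]
        rw [hmu.leadingCoeff, hmv.leadingCoeff, one_mul] at hlc
        have hc0 : c.natDegree = 0 := natDegree_eq_zero_of_isUnit h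
        rw [eq_C_of_natDegree_eq_zero hc0]
        rw [Polynomial.leadingCoeff, hc0] at hlc
        rw [← hlc, map_one]
      rw [hc, hc1, mul_one]
  by_cases h1 : u ∣ A
  · by_cases h2 : v ∣ A
    · exact Or.inr (Or.inr ((hu.coprime_iff_not_dvd.mpr hndvd).mul_dvd h1 h2))
    · exact Or.inr (Or.inl (half_deg hv hdu hune hA h1 h2))
  · by_cases h2 : v ∣ A
    · refine Or.inr (Or.inl (half_deg hu hdv hvne ?_ h2 h1))
      rwa [mul_comm]
    · left
      have c1 : IsCoprime u A := hu.coprime_iff_not_dvd.mpr h1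
      have c2 : IsCoprime v A := hv.coprime_iff_not_dvd.mpr h2
      exact ((c1.mul_left c2).symm).isUnit_of_dvd hA

end Generic

lemma monic_P11 : P11.Monic := by unfold P11; monicity!
lemma deg_P11 : P11.natDegree = 6 := by unfold P11; compute_degree!
lemma P11_ne : P11 ≠ 0 := monic_P11.ne_zero

noncomputable def g1 : (ZMod 2)[X] := X ^ 3 + X ^ 2 + 1
noncomputable def g2 : (ZMod 2)[X] := X ^ 3 + X + 1
noncomputable def q1 : (ZMod 3)[X] := X ^ 2 + 1
noncomputable def q2 : (ZMod 3)[X] := X ^ 2 + 2 * X + 2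

lemma deg_g1 : g1.natDegree = 3 := by unfold g1; compute_degree!
lemma deg_g2 : g2.natDegree = 3 := by unfold g2; compute_degree!
lemma deg_q1 : q1.natDegree = 2 := by unfold q1; compute_degree!
lemma deg_q2 : q2.natDegree = 2 := by unfold q2; compute_degree!

lemma g1_monic : g1.Monic := by unfold g1; monicity!
lemma g2_monic : g2.Monic := by unfold g2; monicity!

lemma g1_ne : g1 ≠ 0 := fun h => by have := deg_g1; rw [h] at this; simp at this
lemma g2_ne : g2 ≠ 0 := fun h => by have := deg_g2; rw [h] at this; simp at this
lemma q1_ne : q1 ≠ 0 := fun h => by have := deg_q1; rw [h] at this; simp at this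
lemma q2_ne : q2 ≠ 0 := fun h => by have := deg_q2; rw [h] at this; simp at this

lemma g1_ne_g2 : g1 ≠ g2 := by
  intro h
  have h2 := congrArg (fun p => Polynomial.coeff p 2) h
  simp [g1, g2, coeff_X_pow, coeff_one, coeff_X] at h2

lemma irr_g1 : Irreducible g1 := by
  rw [irreducible_iff_roots_eq_zero_of_degree_le_three (by simp [deg_g1]) (by simp [deg_g1])]
  rw [Multiset.eq_zero_iff_forall_notMem]
  intro z hz
  rw [mem_roots g1_ne] at hz
  have hz' : z ^ 3 + z ^ 2 + 1 = 0 := by simpa [g1, IsRoot] using hz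
  exact (by decide : ∀ w : ZMod 2, ¬(w ^ 3 + w ^ 2 + 1 = 0)) z hz'

lemma irr_g2 : Irreducible g2 := by
  rw [irreducible_iff_roots_eq_zero_of_degree_le_three (by simp [deg_g2]) (by simp [deg_g2])]
  rw [Multiset.eq_zero_iff_forall_notMem]
  intro z hz
  rw [mem_roots g2_ne] at hz
  have hz' : z ^ 3 + z + 1 = 0 := by simpa [g2, IsRoot] using hz
  exact (by decide : ∀ w : ZMod 2, ¬(w ^ 3 + w + 1 = 0)) z hz'

lemma irr_q1 : Irreducible q1 := by
  rw [irreducible_iff_roots_eq_zero_of_degree_le_three (by simp [deg_q1]) (by simp [deg_q1])]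
  rw [Multiset.eq_zero_iff_forall_notMem]
  intro z hz
  rw [mem_roots q1_ne] at hz
  have hz' : z ^ 2 + 1 = 0 := by simpa [q1, IsRoot] using hz
  exact (by decide : ∀ w : ZMod 3, ¬(w ^ 2 + 1 = 0)) z hz'

lemma irr_q2 : Irreducible q2 := by
  rw [irreducible_iff_roots_eq_zero_of_degree_le_three (by simp [deg_q2]) (by simp [deg_q2])]
  rw [Multiset.eq_zero_iff_forall_notMem]
  intro z hz
  rw [mem_roots q2_ne] at hz
  have hz' : z ^ 2 + 2 * z + 2 = 0 := by simpa [q2, IsRoot] using hz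
  exact (by decide : ∀ w : ZMod 3, ¬(w ^ 2 + 2 * w + 2 = 0)) z hz'

lemma map2 : P11.map (Int.castRingHom (ZMod 2)) = g1 * g2 := by
  have key : P11 = (X ^ 3 + X ^ 2 + 1) * (X ^ 3 + X + 1)
      + 2 * (-X ^ 5 + 3 * X ^ 4 - 19 * X ^ 3 + 38 * X ^ 2 - 61 * X + 665) := by
    simp only [P11]; ring
  have h2 : (2 : (ZMod 2)[X]) = 0 := by
    rw [← map_ofNat (C : ZMod 2 →+* (ZMod 2)[X]) 2, show (2 : ZMod 2) = 0 from rfl, map_zero]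
  rw [key]
  simp only [Polynomial.map_add, Polynomial.map_sub, Polynomial.map_mul, Polynomial.map_pow,
    Polynomial.map_neg, Polynomial.map_ofNat, Polynomial.map_X, Polynomial.map_one]
  rw [h2, zero_mul, add_zero, g1, g2]

lemma map3 : P11.map (Int.castRingHom (ZMod 3)) = q1 * (q1 * q2) := by
  have key : P11 = (X ^ 2 + 1) * ((X ^ 2 + 1) * (X ^ 2 + 2 * X + 2))
      + 3 * (-X ^ 5 + X ^ 4 - 13 * X ^ 3 + 24 * X ^ 2 - 41 * X + 443) := by
    simp only [P11]; ring
  have h3 : (3 : (ZMod 3)[X]) = 0 := by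
    rw [← map_ofNat (C : ZMod 3 →+* (ZMod 3)[X]) 3, show (3 : ZMod 3) = 0 from rfl, map_zero]
  rw [key]
  simp only [Polynomial.map_add, Polynomial.map_sub, Polynomial.map_mul, Polynomial.map_pow,
    Polynomial.map_neg, Polynomial.map_ofNat, Polynomial.map_X, Polynomial.map_one]
  rw [h3, zero_mul, add_zero, q1, q2]

theorem P11_irr_int : Irreducible P11 := by
  constructor
  · intro h
    have h0 := natDegree_eq_zero_of_isUnit h
    rw [deg_P11] at h0
    exact absurd h0 (by norm_num)
  · intro a b hab
    by_contra hcon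
    push_neg at hcon
    obtain ⟨hau, hbu⟩ := hcon
    have ha0 : a ≠ 0 := by rintro rfl; rw [zero_mul] at hab; exact P11_ne hab
    have hb0 : b ≠ 0 := by rintro rfl; rw [mul_zero] at hab; exact P11_ne hab
    have hlc : a.leadingCoeff * b.leadingCoeff = 1 := by
      rw [← leadingCoeff_mul, ← hab, monic_P11.leadingCoeff]
    have hua : IsUnit a.leadingCoeff := IsUnit.of_mul_eq_one _ hlc
    have hub : IsUnit b.leadingCoeff := IsUnit.of_mul_eq_one _ (by rwa [mul_comm] at hlc)
    have hdeg1 : 1 ≤ a.natDegree := by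
      rcases Nat.eq_zero_or_pos a.natDegree with h | h
      · exfalso
        apply hau
        rw [eq_C_of_natDegree_eq_zero h]
        exact isUnit_C.mpr (by rwa [Polynomial.leadingCoeff, h] at hua)
      · exact h
    have hdeg1b : 1 ≤ b.natDegree := by
      rcases Nat.eq_zero_or_pos b.natDegree with h | h
      · exfalso
        apply hbu
        rw [eq_C_of_natDegree_eq_zero h]
        exact isUnit_C.mpr (by rwa [Polynomial.leadingCoeff, h] at hub)
      · exact h
    have hsum : a.natDegree + b.natDegree = 6 := by
      rw [← deg_P11, hab, natDegree_mul ha0 hb0]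
    have hlcval : a.leadingCoeff = 1 ∨ a.leadingCoeff = -1 := Int.isUnit_iff.mp hua
    have hlc2 : (Int.castRingHom (ZMod 2)) a.leadingCoeff ≠ 0 := by
      rcases hlcval with h | h <;> rw [h] <;> decide
    have hlc3 : (Int.castRingHom (ZMod 3)) a.leadingCoeff ≠ 0 := by
      rcases hlcval with h | h <;> rw [h] <;> decide
    set A2 := a.map (Int.castRingHom (ZMod 2)) with hA2def
    have hA2deg : A2.natDegree = a.natDegree := natDegree_map_of_leadingCoeff_ne_zero _ hlc2
    have hA2ne : A2 ≠ 0 := by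
      intro h
      apply hlc2
      rw [← leadingCoeff_map_of_leadingCoeff_ne_zero _ hlc2, ← hA2def, h, leadingCoeff_zero]
    have hA2dvd : A2 ∣ g1 * g2 := by
      rw [← map2]
      exact Polynomial.map_dvd _ ⟨b, hab⟩
    rcases divisor_deg irr_g1 irr_g2 deg_g1 deg_g2 g1_ne_g2 g1_monic g2_monic hA2dvd
      with h | h | h
    · have h0 := natDegree_eq_zero_of_isUnit h
      omega
    · -- degree of the factor is 3: rule this out mod 3
      have hd3 : a.natDegree = 3 := by omega
      set A3 := a.map (Int.castRingHom (ZMod 3)) with hA3def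
      have hA3deg : A3.natDegree = 3 := by
        rw [hA3def, natDegree_map_of_leadingCoeff_ne_zero _ hlc3, hd3]
      have hA3ne : A3 ≠ 0 := by
        intro h'
        rw [h', natDegree_zero] at hA3deg
        exact absurd hA3deg (by norm_num)
      have hA3nu : ¬ IsUnit A3 := by
        intro h'
        have := natDegree_eq_zero_of_isUnit h'
        omega
      have hA3dvd : A3 ∣ q1 * (q1 * q2) := by
        rw [← map3]
        exact Polynomial.map_dvd _ ⟨b, hab⟩
      obtain ⟨r, hrirr, hrdvd⟩ := WfDvdMonoid.exists_irreducible_factor hA3nu hA3ne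
      have hrprime : Prime r := hrirr.prime
      have hrq : r ∣ q1 ∨ r ∣ q2 := by
        rcases hrprime.dvd_mul.mp (hrdvd.trans hA3dvd) with h' | h'
        · exact Or.inl h'
        · exact hrprime.dvd_mul.mp h'
      have hrdeg : r.natDegree = 2 := by
        rcases hrq with h' | h'
        · obtain ⟨c, hc⟩ := h'
          rcases irr_q1.isUnit_or_isUnit hc with h'' | h''
          · exact absurd h'' hrirr.not_isUnit
          · have hq := deg_q1
            rw [hc, natDegree_mul hrirr.ne_zero h''.ne_zero,
              natDegree_eq_zero_of_isUnit h''] at hq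
            omega
        · obtain ⟨c, hc⟩ := h'
          rcases irr_q2.isUnit_or_isUnit hc with h'' | h''
          · exact absurd h'' hrirr.not_isUnit
          · have hq := deg_q2
            rw [hc, natDegree_mul hrirr.ne_zero h''.ne_zero,
              natDegree_eq_zero_of_isUnit h''] at hq
            omega
      obtain ⟨B, hB⟩ := hrdvd
      have hBne : B ≠ 0 := fun h' => hA3ne (by rw [hB, h', mul_zero])
      have hBdeg : B.natDegree = 1 := by
        have h6 := hA3deg
        rw [hB, natDegree_mul hrirr.ne_zero hBne, hrdeg] at h6
        omega
      have hBdeg' : B.degree = 1 := by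
        exact (degree_eq_iff_natDegree_eq hBne).mpr hBdeg
      obtain ⟨z, hz⟩ := exists_root_of_degree_eq_one hBdeg'
      have hBA3 : B ∣ A3 := ⟨r, by rw [hB, mul_comm]⟩
      have hBP : B ∣ q1 * (q1 * q2) := dvd_trans hBA3 hA3dvd
      obtain ⟨D, hD⟩ := hBP
      have hev : eval z (q1 * (q1 * q2)) = 0 := by
        rw [hD, eval_mul, hz, zero_mul]
      have hev' : (z ^ 2 + 1) * ((z ^ 2 + 1) * (z ^ 2 + 2 * z + 2)) = 0 := by
        simpa [q1, q2, eval_mul, eval_add, eval_pow] using hev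
      exact (by decide :
        ∀ w : ZMod 3, ¬((w ^ 2 + 1) * ((w ^ 2 + 1) * (w ^ 2 + 2 * w + 2)) = 0)) z hev'
    · have h6 : (g1 * g2).natDegree ≤ A2.natDegree := natDegree_le_of_dvd h hA2ne
      rw [natDegree_mul g1_ne g2_ne, deg_g1, deg_g2, hA2deg] at h6
      omega

end P11Aux

/-- `P₁₁` is irreducible over `ℚ`. -/
theorem P11_irreducible_over_Q : Irreducible (P11.map (Int.castRingHom ℚ)) := by
  have h := (P11Aux.monic_P11.irreducible_iff_irreducible_map_fraction_map (K := ℚ)).mp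
    P11Aux.P11_irr_int
  rwa [algebraMap_int_eq] at h
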